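/- Let σ : 𝔽₄ → 𝔽₄ be the Frobenius automorphism x ↦ x² and let B = [[1,ζ],[0,ζ]] ∈ GL(2,𝔽₄). The semilinear map v ↦ B·σ(v) (Frobenius applied coordinatewise, then multiplication by B) permutes the set {P₁,…,P₅} by the 4-cycle (2 4 5 3): it fixes P₁ and sends P₂ ↦ P₄, P₄ ↦ P₅, P₅ ↦ P₃, P₃ ↦ P₂. -/
import Mathlib


open Matrix

/-- With `σ : 𝔽₄ → 𝔽₄` the Frobenius automorphism `x ↦ x²` and `B = [[1,ζ],[0,ζ]]`,
the semilinear map `v ↦ B·σ(v)` (Frobenius applied coordinatewise, then multiplication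
by `B`) permutes `{P₁,…,P₅}` by the 4-cycle `(2 4 5 3)`: it fixes `P₁` and sends
`P₂ ↦ P₄`, `P₄ ↦ P₅`, `P₅ ↦ P₃`, `P₃ ↦ P₂`.
(Below, indices are `0`-based: `P 0 = P₁`, …, `P 4 = P₅`.) -/
theorem stmt_2 (ζ : GaloisField 2 2) (hζ : ζ ^ 2 = ζ + 1) :
    let B : Matrix (Fin 2) (Fin 2) (GaloisField 2 2) := !![1, ζ; 0, ζ]
    let P : Fin 5 → (Fin 2 → GaloisField 2 2) :=
      ![![1, 0], ![0, 1], ![1, ζ], ![ζ, ζ], ![ζ, 1]]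
    let f : (Fin 2 → GaloisField 2 2) → (Fin 2 → GaloisField 2 2) :=
      fun v => B *ᵥ (fun i => (v i) ^ 2)
    f (P 0) = P 0 ∧ f (P 1) = P 3 ∧ f (P 3) = P 4 ∧ f (P 4) = P 2 ∧ f (P 2) = P 1 := by
  intro B P f
  have h2 : (2 : GaloisField 2 2) = 0 := by
    have := CharP.cast_eq_zero (GaloisField 2 2) 2
    simpa using this
  have hz3 : ζ ^ 3 = 1 := by linear_combination ζ * hζ + hζ + ζ * h2
  refine ⟨?_, ?_, ?_, ?_, ?_⟩ <;>
    funext i <;> fin_cases i <;>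
      simp [f, B, P, mulVec, dotProduct, Fin.sum_univ_two, vecHead, vecTail] <;>
      first
        | rfl
        | linear_combination hζ + hz3 + h2
        | linear_combination hz3
        | linear_combination hζ + ζ * h2
        | linear_combination hz3 + h2
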